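/- An inverse sequence of groups that is pro-isomorphic to an inverse sequence of finitely generated groups and also pro-isomorphic to an inverse sequence of free groups is pro-isomorphic to an inverse sequence of finitely generated free groups. -/

import Mathlib

open CategoryTheory

universe u

/-- The composition of the bonding maps of an inverse sequence of groups,
`G j ⟶ G i` for `i ≤ j`. -/
def bondComp (G : ℕ → GrpCat.{u}) (f : ∀ i, G (i + 1) ⟶ G i) :
    (i j : ℕ) → i ≤ j → (G j ⟶ G i)
  | i, 0, h => by
      obtain rfl : i = 0 := Nat.le_zero.mp h
      exact 𝟙 (G 0)
  | i, j + 1, h =>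
      if h' : i = j + 1 then by subst h'; exact 𝟙 (G (j + 1))
      else f j ≫ bondComp G f i j (by omega)

/-- A pro-isomorphism (commuting ladder diagram after passing to subsequences)
between two inverse sequences of groups. -/
structure ProIso (G : ℕ → GrpCat.{u}) (f : ∀ i, G (i + 1) ⟶ G i)
    (H : ℕ → GrpCat.{u}) (g : ∀ i, H (i + 1) ⟶ H i) where
  I : ℕ → ℕ
  J : ℕ → ℕ
  strictI : StrictMono I
  strictJ : StrictMono J
  hIJ : ∀ k, I k ≤ J k
  hJI : ∀ k, J k ≤ I (k + 1)
  d : ∀ k, H (J k) ⟶ G (I k)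
  u : ∀ k, G (I (k + 1)) ⟶ H (J k)
  comm₁ : ∀ k, u k ≫ d k =
    bondComp G f (I k) (I (k + 1)) (le_of_lt (strictI (Nat.lt_succ_self k)))
  comm₂ : ∀ k, d (k + 1) ≫ u k =
    bondComp H g (J k) (J (k + 1)) (le_of_lt (strictJ (Nat.lt_succ_self k)))

theorem bondComp_self (G : ℕ → GrpCat.{u}) (f : ∀ i, G (i + 1) ⟶ G i) (i : ℕ) (h : i ≤ i) :
    bondComp G f i i h = 𝟙 (G i) := by
  cases i with
  | zero => rfl
  | succ n => rw [bondComp]; simp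

theorem bondComp_succ (G : ℕ → GrpCat.{u}) (f : ∀ i, G (i + 1) ⟶ G i) (i j : ℕ) (h : i ≤ j) :
    bondComp G f i (j + 1) (by omega) = f j ≫ bondComp G f i j h := by
  rw [bondComp]
  have : ¬ i = j + 1 := by omega
  simp [this]

theorem bondComp_trans (G : ℕ → GrpCat.{u}) (f : ∀ i, G (i + 1) ⟶ G i) (i j l : ℕ)
    (hij : i ≤ j) (hjl : j ≤ l) :
    bondComp G f j l hjl ≫ bondComp G f i j hij = bondComp G f i l (hij.trans hjl) := by
  induction l with
  | zero =>
    obtain rfl : j = 0 := by omega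
    obtain rfl : i = 0 := by omega
    simp [bondComp_self]
  | succ n ih =>
    rcases Nat.eq_or_lt_of_le hjl with rfl | hlt
    · simp [bondComp_self]
    · have hjn : j ≤ n := by omega
      rw [bondComp_succ G f j n hjn, bondComp_succ G f i n (hij.trans hjn),
        Category.assoc, ih hjn]

variable {G : ℕ → GrpCat.{u}} {f : ∀ i, G (i + 1) ⟶ G i}
  {H : ℕ → GrpCat.{u}} {g : ∀ i, H (i + 1) ⟶ H i}
  {C : ℕ → GrpCat.{u}} {c : ∀ i, C (i + 1) ⟶ C i}

/-- Symmetry of pro-isomorphism. -/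
def ProIso.symm (P : ProIso G f H g) : ProIso H g G f where
  I := fun k => P.J k
  J := fun k => P.I (k + 1)
  strictI := P.strictJ
  strictJ := fun _ _ h => P.strictI (by omega)
  hIJ := fun k => P.hJI k
  hJI := fun k => P.hIJ (k + 1)
  d := fun k => P.u k
  u := fun k => P.d (k + 1)
  comm₁ := fun k => P.comm₂ k
  comm₂ := fun k => P.comm₁ (k + 1)

/-- Ladder lemma A. -/
theorem ProIso.ladderA (P : ProIso G f H g) (k k' : ℕ) (h : k ≤ k') :
    P.u k' ≫ bondComp H g (P.J k) (P.J k') (P.strictJ.monotone h) ≫ P.d k =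
      bondComp G f (P.I k) (P.I (k' + 1)) (P.strictI.monotone (by omega)) := by
  induction k' with
  | zero =>
    obtain rfl : k = 0 := by omega
    rw [bondComp_self]
    simpa using P.comm₁ 0
  | succ n ih =>
    by_cases hk : k = n + 1
    · subst hk
      rw [bondComp_self]
      simpa using P.comm₁ (n + 1)
    · have hkn : k ≤ n := by omega
      rw [← bondComp_trans H g (P.J k) (P.J n) (P.J (n + 1))
          (P.strictJ.monotone hkn) (P.strictJ.monotone (by omega))]
      have := P.comm₂ n
      calc P.u (n + 1) ≫ (bondComp H g (P.J n) (P.J (n + 1)) _ ≫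
              bondComp H g (P.J k) (P.J n) _) ≫ P.d k
          = (P.u (n + 1) ≫ (P.d (n+1) ≫ P.u n)) ≫
              bondComp H g (P.J k) (P.J n) (P.strictJ.monotone hkn) ≫ P.d k := by
            rw [P.comm₂ n]; simp [Category.assoc]
        _ = bondComp G f (P.I (n+1)) (P.I (n + 2)) (P.strictI.monotone (by omega)) ≫
              bondComp G f (P.I k) (P.I (n+1)) (P.strictI.monotone (by omega)) := by
            rw [← Category.assoc (P.u (n+1)), P.comm₁ (n+1), Category.assoc, ih hkn]
        _ = _ := bondComp_trans G f _ _ _ _ _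

/-- Ladder lemma B. -/
theorem ProIso.ladderB (P : ProIso G f H g) (m m₁ : ℕ) (h : m + 1 ≤ m₁) :
    P.d m₁ ≫ bondComp G f (P.I (m + 1)) (P.I m₁) (P.strictI.monotone h) ≫ P.u m =
      bondComp H g (P.J m) (P.J m₁) (P.strictJ.monotone (by omega)) := by
  induction m₁ with
  | zero => omega
  | succ n ih =>
    by_cases hm : m = n
    · subst hm
      rw [bondComp_self]
      simpa using P.comm₂ m
    · have hmn : m + 1 ≤ n := by omega
      rw [← bondComp_trans G f (P.I (m+1)) (P.I n) (P.I (n + 1))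
          (P.strictI.monotone hmn) (P.strictI.monotone (by omega))]
      calc P.d (n + 1) ≫ (bondComp G f (P.I n) (P.I (n + 1)) _ ≫
              bondComp G f (P.I (m+1)) (P.I n) _) ≫ P.u m
          = (P.d (n + 1) ≫ (P.u n ≫ P.d n)) ≫
              bondComp G f (P.I (m+1)) (P.I n) (P.strictI.monotone hmn) ≫ P.u m := by
            rw [P.comm₁ n]; simp [Category.assoc]
        _ = bondComp H g (P.J n) (P.J (n+1)) (P.strictJ.monotone (by omega)) ≫
              bondComp H g (P.J m) (P.J n) (P.strictJ.monotone (by omega)) := by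
            rw [← Category.assoc (P.d (n+1)), P.comm₂ n, Category.assoc, ih hmn]
        _ = _ := bondComp_trans H g _ _ _ _ _

/-- Index sequence used in transitivity. -/
def transK (P : ProIso G f H g) (Q : ProIso H g C c) : ℕ → ℕ
  | 0 => 0
  | n + 1 => Q.I (P.J (transK P Q n) + 1) + 1

theorem transK_succ (P : ProIso G f H g) (Q : ProIso H g C c) (n : ℕ) :
    transK P Q (n + 1) = Q.I (P.J (transK P Q n) + 1) + 1 := rfl

theorem transK_strict (P : ProIso G f H g) (Q : ProIso H g C c) :
    StrictMono (transK P Q) := by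
  apply strictMono_nat_of_lt_succ
  intro n
  have h1 := P.strictJ.le_apply (x := transK P Q n)
  have h2 := Q.strictI.le_apply (x := P.J (transK P Q n) + 1)
  rw [transK_succ]
  omega

/-- Transitivity of pro-isomorphism. -/
def ProIso.trans (P : ProIso G f H g) (Q : ProIso H g C c) : ProIso G f C c where
  I := fun n => P.I (transK P Q n)
  J := fun n => Q.J (P.J (transK P Q n))
  strictI := P.strictI.comp (transK_strict P Q)
  strictJ := Q.strictJ.comp (P.strictJ.comp (transK_strict P Q))
  hIJ := fun n =>
    le_trans (P.hIJ _) (le_trans Q.strictI.le_apply (Q.hIJ _))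
  hJI := fun n => by
    show Q.J (P.J (transK P Q n)) ≤ P.I (transK P Q (n + 1))
    rw [transK_succ]
    exact le_trans (Q.hJI _) (le_trans P.strictJ.le_apply (P.hJI _))
  d := fun n => Q.d (P.J (transK P Q n)) ≫
    bondComp H g (P.J (transK P Q n)) (Q.I (P.J (transK P Q n)))
      Q.strictI.le_apply ≫ P.d (transK P Q n)
  u := fun n => P.u (Q.I (P.J (transK P Q n) + 1)) ≫
    bondComp H g (Q.I (P.J (transK P Q n) + 1)) (P.J (Q.I (P.J (transK P Q n) + 1)))
      P.strictJ.le_apply ≫ Q.u (P.J (transK P Q n))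
  comm₁ := fun n => by
    set kn := transK P Q n with hkn
    set k' := Q.I (P.J kn + 1) with hk'
    have hk : kn ≤ k' :=
      le_trans (le_trans P.strictJ.le_apply (Nat.le_succ _)) Q.strictI.le_apply
    simp only [Category.assoc, transK_succ]
    rw [reassoc_of% (Q.comm₁ (P.J kn))]
    rw [reassoc_of% (bondComp_trans H g (Q.I (P.J kn)) (Q.I (P.J kn + 1)) (P.J k')
      (Q.strictI.monotone (Nat.le_succ _)) P.strictJ.le_apply)]
    rw [reassoc_of% (bondComp_trans H g (P.J kn) (Q.I (P.J kn)) (P.J k')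
      Q.strictI.le_apply (le_trans (Q.strictI.monotone (Nat.le_succ _)) P.strictJ.le_apply))]
    exact P.ladderA kn k' hk
  comm₂ := fun n => by
    have hm : P.J (transK P Q n) + 1 ≤ P.J (Q.I (P.J (transK P Q n) + 1) + 1) := by
      have h1 : P.J (transK P Q n) + 1 ≤ Q.I (P.J (transK P Q n) + 1) :=
        Q.strictI.le_apply
      have h2 : Q.I (P.J (transK P Q n) + 1) + 1 ≤
          P.J (Q.I (P.J (transK P Q n) + 1) + 1) := P.strictJ.le_apply
      omega
    simp only [Category.assoc, transK_succ]
    rw [reassoc_of% (P.comm₂ (Q.I (P.J (transK P Q n) + 1)))]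
    rw [reassoc_of% (bondComp_trans H g (Q.I (P.J (transK P Q n) + 1))
      (P.J (Q.I (P.J (transK P Q n) + 1))) (P.J (Q.I (P.J (transK P Q n) + 1) + 1))
      P.strictJ.le_apply (P.strictJ.monotone (Nat.le_succ _)))]
    rw [reassoc_of% (bondComp_trans H g (Q.I (P.J (transK P Q n) + 1))
      (P.J (Q.I (P.J (transK P Q n) + 1) + 1))
      (Q.I (P.J (Q.I (P.J (transK P Q n) + 1) + 1)))
      (le_trans (Nat.le_succ _) P.strictJ.le_apply) Q.strictI.le_apply)]
    exact Q.ladderB (P.J (transK P Q n)) (P.J (Q.I (P.J (transK P Q n) + 1) + 1)) hm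

theorem bondComp_trans_apply (G : ℕ → GrpCat.{u}) (f : ∀ i, G (i + 1) ⟶ G i) (i j l : ℕ)
    (hij : i ≤ j) (hjl : j ≤ l) (x : G l) :
    bondComp G f i j hij (bondComp G f j l hjl x) =
      bondComp G f i l (hij.trans hjl) x := by
  rw [← bondComp_trans G f i j l hij hjl]
  simp

section Image

variable (T : ProIso H g C c)

/-- The image subgroups. -/
def imgK (n : ℕ) : Subgroup (C (T.J n)) := MonoidHom.range (T.u n).hom

theorem bond_mem_imgK (n : ℕ) (x : C (T.J (n + 1))) :
    bondComp C c (T.J n) (T.J (n + 1)) (T.strictJ.monotone (Nat.le_succ n)) x ∈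
      imgK T n := by
  have h := T.comm₂ n
  have : bondComp C c (T.J n) (T.J (n + 1)) (T.strictJ.monotone (Nat.le_succ n)) x =
      T.u n (T.d (n + 1) x) := by
    rw [← h]
    simp
  rw [this]
  exact ⟨T.d (n + 1) x, rfl⟩

/-- The image sequence as groups. -/
def imgKG (n : ℕ) : GrpCat.{u} := GrpCat.of ↥(imgK T n)

/-- Bonding maps of the image sequence. -/
def imgκ (n : ℕ) : imgKG T (n + 1) ⟶ imgKG T n :=
  GrpCat.ofHom (MonoidHom.codRestrict
    ((bondComp C c (T.J n) (T.J (n + 1)) (T.strictJ.monotone (Nat.le_succ n))).hom.comp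
      (imgK T (n + 1)).subtype) (imgK T n) (fun x => bond_mem_imgK T n x.1))

/-- Underlying element of the ambient group. -/
def imgVal (n : ℕ) (x : imgKG T n) : C (T.J n) := (imgK T n).subtype x

theorem imgVal_injective (n : ℕ) : Function.Injective (imgVal T n) :=
  fun _ _ h => Subtype.ext h

theorem imgκ_apply (n : ℕ) (x : imgKG T (n + 1)) :
    imgVal T n (imgκ T n x) =
      bondComp C c (T.J n) (T.J (n + 1)) (T.strictJ.monotone (Nat.le_succ n))
        (imgVal T (n + 1) x) := rfl

theorem bondComp_imgK_apply (i j : ℕ) (h : i ≤ j) (x : imgKG T j) :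
    imgVal T i (bondComp (imgKG T) (imgκ T) i j h x) =
      bondComp C c (T.J i) (T.J j) (T.strictJ.monotone h) (imgVal T j x) := by
  induction j with
  | zero =>
    obtain rfl : i = 0 := by omega
    rw [bondComp_self, bondComp_self]
    rfl
  | succ n ih =>
    by_cases hi : i = n + 1
    · subst hi
      rw [bondComp_self, bondComp_self]
      rfl
    · have hin : i ≤ n := by omega
      rw [bondComp_succ (imgKG T) (imgκ T) i n hin,
        show (imgκ T n ≫ bondComp (imgKG T) (imgκ T) i n hin) x =
          bondComp (imgKG T) (imgκ T) i n hin (imgκ T n x) from rfl,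
        ih hin, imgκ_apply, bondComp_trans_apply]

/-- Index sequence for the image pro-isomorphism. -/
def imgI (T : ProIso H g C c) : ℕ → ℕ
  | 0 => 0
  | k + 1 => T.J (imgI T k + 1) + 1

theorem imgI_succ (k : ℕ) : imgI T (k + 1) = T.J (imgI T k + 1) + 1 := rfl

theorem imgI_strict : StrictMono (imgI T) := by
  apply strictMono_nat_of_lt_succ
  intro n
  have := T.strictJ.le_apply (x := imgI T n + 1)
  rw [imgI_succ]
  omega

/-- Corestriction of the bonding map onto the image subgroup. -/
def imgCr (k : ℕ) : C (T.J (imgI T k + 1)) ⟶ imgKG T (imgI T k) :=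
  GrpCat.ofHom (MonoidHom.codRestrict
    (bondComp C c (T.J (imgI T k)) (T.J (imgI T k + 1))
      (T.strictJ.monotone (Nat.le_succ _))).hom
    (imgK T (imgI T k)) (fun x => bond_mem_imgK T (imgI T k) x))

theorem imgVal_imgCr (k : ℕ) (x : C (T.J (imgI T k + 1))) :
    imgVal T (imgI T k) (imgCr T k x) =
      bondComp C c (T.J (imgI T k)) (T.J (imgI T k + 1))
        (T.strictJ.monotone (Nat.le_succ _)) x := rfl

/-- The pro-isomorphism between a sequence and its image sequence. -/
def imgProIso : ProIso C c (imgKG T) (imgκ T) where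
  I := imgI T
  J := imgI T
  strictI := imgI_strict T
  strictJ := imgI_strict T
  hIJ := fun _ => le_refl _
  hJI := fun k => le_of_lt (imgI_strict T (Nat.lt_succ_self k))
  d := fun k => GrpCat.ofHom ((imgK T (imgI T k)).subtype) ≫
    bondComp C c (imgI T k) (T.J (imgI T k)) T.strictJ.le_apply
  u := fun k =>
    bondComp C c (T.J (imgI T k + 1)) (imgI T (k + 1))
      (by rw [imgI_succ]; exact Nat.le_succ _) ≫ imgCr T k
  comm₁ := fun k => by
    ext x
    show bondComp C c (imgI T k) (T.J (imgI T k)) T.strictJ.le_apply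
      (imgVal T (imgI T k) (imgCr T k
        (bondComp C c (T.J (imgI T k + 1)) (imgI T (k + 1)) _ x))) = _
    rw [imgVal_imgCr, bondComp_trans_apply, bondComp_trans_apply]
  comm₂ := fun k => by
    ext x
    apply imgVal_injective T (imgI T k)
    show imgVal T (imgI T k) (imgCr T k
        (bondComp C c (T.J (imgI T k + 1)) (imgI T (k + 1)) _
          (bondComp C c (imgI T (k + 1)) (T.J (imgI T (k + 1))) _
            (imgVal T (imgI T (k + 1)) x)))) = _
    rw [imgVal_imgCr, bondComp_trans_apply, bondComp_trans_apply,
      bondComp_imgK_apply]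

end Image

/-- An inverse sequence of groups that is pro-isomorphic to an inverse sequence of
finitely generated groups and also pro-isomorphic to an inverse sequence of free
groups is pro-isomorphic to an inverse sequence of finitely generated free groups. -/
theorem proIso_fg_free_of_proIso_fg_and_proIso_free
    (G : ℕ → GrpCat.{u}) (f : ∀ i, G (i + 1) ⟶ G i)
    (hfg : ∃ (H : ℕ → GrpCat.{u}) (g : ∀ i, H (i + 1) ⟶ H i),
      (∀ i, Group.FG (H i)) ∧ Nonempty (ProIso G f H g))
    (hfree : ∃ (H : ℕ → GrpCat.{u}) (g : ∀ i, H (i + 1) ⟶ H i),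
      (∀ i, IsFreeGroup (H i)) ∧ Nonempty (ProIso G f H g)) :
    ∃ (H : ℕ → GrpCat.{u}) (g : ∀ i, H (i + 1) ⟶ H i),
      (∀ i, Group.FG (H i) ∧ IsFreeGroup (H i)) ∧ Nonempty (ProIso G f H g) := by
  obtain ⟨A, a, hA, ⟨P⟩⟩ := hfg
  obtain ⟨B, b, hB, ⟨Q⟩⟩ := hfree
  let T : ProIso A a B b := P.symm.trans Q
  refine ⟨imgKG T, imgκ T, fun n => ⟨?_, ?_⟩, ⟨Q.trans (imgProIso T)⟩⟩
  · haveI := hA (T.I (n + 1))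
    exact Group.fg_range (T.u n).hom
  · haveI := hB (T.J n)
    exact subgroupIsFreeOfIsFree (imgK T n)
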